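/- For each real θ > -1 and u, v in [0,1], the Plackett function C_{P;θ}(u,v) := 2(θ+1)uv / (1 + θ(u+v) + sqrt(1 + 2θ(u+v-2uv) + θ²(u-v)²)) satisfies the quadratic equation C - uv = θ·(u - C)·(v - C), where C = C_{P;θ}(u,v); moreover the expression under the square root, 1 + 2θ(u+v-2uv) + θ²(u-v)², is nonnegative. -/

import Mathlib

/-- The Plackett copula. -/
noncomputable def plackett (θ u v : ℝ) : ℝ :=
  2 * (θ + 1) * u * v /
    (1 + θ * (u + v) + Real.sqrt (1 + 2 * θ * (u + v - 2 * u * v) + θ^2 * (u - v)^2))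

/-- For `θ > -1` and `u, v ∈ [0,1]`, the radicand `1 + 2θ(u+v-2uv) + θ²(u-v)²` is
nonnegative and `C = C_{P;θ}(u,v)` solves the Plackett quadratic equation
`C - uv = θ·(u - C)·(v - C)`. -/
theorem stmt9 (θ u v : ℝ) (hθ : -1 < θ) (hu : u ∈ Set.Icc (0:ℝ) 1)
    (hv : v ∈ Set.Icc (0:ℝ) 1) :
    0 ≤ 1 + 2 * θ * (u + v - 2 * u * v) + θ^2 * (u - v)^2
    ∧ plackett θ u v - u * v = θ * (u - plackett θ u v) * (v - plackett θ u v) := by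
  obtain ⟨hu0, hu1⟩ := hu
  obtain ⟨hv0, hv1⟩ := hv
  have hθ1 : (0:ℝ) < 1 + θ := by linarith
  have hD : 0 ≤ 1 + 2 * θ * (u + v - 2 * u * v) + θ^2 * (u - v)^2 := by
    rcases le_or_gt θ 0 with h | h
    · nlinarith [sq_nonneg (1 + θ*(u+v)), mul_nonneg (mul_nonneg (mul_nonneg (neg_nonneg.2 h) hθ1.le) hu0) hv0]
    · nlinarith [sq_nonneg (1 + θ*(u-v)), mul_nonneg (mul_nonneg h.le hv0) (by linarith : (0:ℝ) ≤ 1 - u)]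
  refine ⟨hD, ?_⟩
  set s := Real.sqrt (1 + 2 * θ * (u + v - 2 * u * v) + θ^2 * (u - v)^2) with hs_def
  have hs0 : 0 ≤ s := Real.sqrt_nonneg _
  have hs2 : s ^ 2 = 1 + 2 * θ * (u + v - 2 * u * v) + θ^2 * (u - v)^2 :=
    Real.sq_sqrt hD
  have hd : 0 < 1 + θ * (u + v) + s := by
    rcases lt_or_ge 0 (1 + θ * (u + v)) with h | h
    · linarith
    · have hθ0 : θ < 0 := by nlinarith
      have hu' : 0 < u := by nlinarith
      have hv' : 0 < v := by nlinarith
      have key : (-(1 + θ * (u + v)))^2 < s^2 := by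
        rw [hs2]
        nlinarith [mul_pos (mul_pos (mul_pos (neg_pos.2 hθ0) hθ1) hu') hv']
      nlinarith
  have hC : plackett θ u v = 2 * (θ + 1) * u * v / (1 + θ * (u + v) + s) := rfl
  rcases eq_or_ne θ 0 with h0 | h0
  · subst h0
    have : s = 1 := by
      have : s ^ 2 = 1 ^ 2 := by rw [hs2]; ring
      nlinarith
    rw [hC, this]
    ring_nf
  · -- θ ≠ 0 : plackett = (1 + θ(u+v) - s) / (2θ)
    have hC2 : plackett θ u v = (1 + θ * (u + v) - s) / (2 * θ) := by
      rw [hC, div_eq_div_iff hd.ne' (mul_ne_zero two_ne_zero h0)]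
      linear_combination hs2
    rw [hC2]
    field_simp
    ring_nf
    linear_combination (-1) * hs2
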